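/- Fix a positive integer m and let p(k,m) denote the number of partitions of k into at most m parts, equivalently p(k,m) = #{x ∈ ℤ^m : x_1 ≥ x_2 ≥ … ≥ x_m ≥ 0 and x_1 + … + x_m = k}. Then p(·,m) is a quasipolynomial of degree m−1 with period L = lcm(1,2,…,m): there exist polynomials p_0,…,p_{L−1} with rational coefficients, each of degree m−1, such that p(k,m) = p_{k mod L}(k) for all positive integers k. -/

import Mathlib

open Polynomial

open Polynomial Finset

private lemma coeff_pow_sub (e j : ℕ) (hj : e < j) :
    (((X + 1 : ℚ[X]) ^ (e+1) - X ^ (e+1)).coeff j) = if j = e + 1 then 0 else 0 := by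
  rw [coeff_sub, coeff_X_add_one_pow, coeff_X_pow]
  split_ifs with h
  · subst h; simp
  · rw [Nat.choose_eq_zero_of_lt (by omega)]; simp

private lemma DX_natDegree_le (e : ℕ) :
    ((X + 1 : ℚ[X]) ^ (e+1) - X ^ (e+1)).natDegree ≤ e := by
  rw [natDegree_le_iff_coeff_eq_zero]
  intro j hj
  have := coeff_pow_sub e j hj
  simpa using this

private lemma DX_coeff_top (e : ℕ) :
    ((X + 1 : ℚ[X]) ^ (e+1) - X ^ (e+1)).coeff e = (e+1 : ℚ) := by
  rw [coeff_sub, coeff_X_add_one_pow, coeff_X_pow]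
  rw [if_neg (by omega), Nat.choose_succ_self_right]
  push_cast; ring

/-- Discrete antiderivative, auxiliary existence with degree bound. -/
private lemma antideriv_aux : ∀ d : ℕ, ∀ R : ℚ[X], R.natDegree ≤ d →
    ∃ S : ℚ[X], S.comp (X + 1) - S = R ∧ S.coeff 0 = 0 ∧ S.natDegree ≤ d + 1 := by
  intro d
  induction d with
  | zero =>
    intro R hR
    refine ⟨C (R.coeff 0) * X, ?_, by simp, ?_⟩
    · have : R = C (R.coeff 0) := (eq_C_of_natDegree_le_zero hR)
      rw [mul_comp, C_comp, X_comp]; ring_nf; rw [← this]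
    · exact (natDegree_mul_le).trans (by simp)
  | succ d ih =>
    intro R hR
    set c : ℚ := R.coeff (d+1) with hc
    set T : ℚ[X] := C (c / (d+2)) * X ^ (d+2) with hT
    have hDT : T.comp (X+1) - T = C (c / (d+2)) * ((X + 1) ^ (d+2) - X ^ (d+2)) := by
      rw [hT, mul_comp, C_comp, pow_comp, X_comp]; ring
    set R' : ℚ[X] := R - (T.comp (X+1) - T) with hR'
    have hdeg' : R'.natDegree ≤ d := by
      rw [natDegree_le_iff_coeff_eq_zero]
      intro j hj
      rw [hR', coeff_sub, hDT, coeff_C_mul]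
      rcases Nat.lt_or_ge (d+1) j with h | h
      · have h1 : R.coeff j = 0 := coeff_eq_zero_of_natDegree_lt (lt_of_le_of_lt hR h)
        have h2 := coeff_pow_sub (d+1) j h
        simp only [ite_self] at h2
        rw [h1, h2, mul_zero, sub_zero]
      · have hj1 : j = d + 1 := by omega
        subst hj1
        rw [DX_coeff_top (d+1)]
        rw [← hc]
        field_simp
        push_cast; ring
    obtain ⟨S', hS1, hS2, hS3⟩ := ih R' hdeg'
    refine ⟨T + S', ?_, ?_, ?_⟩
    · rw [add_comp]; rw [hR'] at hS1; ring_nf; ring_nf at hS1 ⊢; linear_combination hS1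
    · rw [coeff_add, hS2, hT, coeff_C_mul, coeff_X_pow, if_neg (by omega), mul_zero, add_zero]
    · refine (natDegree_add_le _ _).trans (max_le ?_ (by omega))
      exact (natDegree_C_mul_X_pow_le _ _)

/-- Discrete antiderivative with exact degree and leading coefficient. -/
lemma antideriv (R : ℚ[X]) (hR : R ≠ 0) :
    ∃ S : ℚ[X], (∀ n : ℕ, S.eval (n : ℚ) = ∑ i ∈ Finset.range n, R.eval (i : ℚ)) ∧
      S.natDegree = R.natDegree + 1 ∧
      S.leadingCoeff = R.leadingCoeff / (R.natDegree + 1) := by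
  have key : ∀ S R : ℚ[X], S.comp (X + 1) - S = R → S.coeff 0 = 0 →
      ∀ n : ℕ, S.eval (n : ℚ) = ∑ i ∈ Finset.range n, R.eval (i : ℚ) := by
    intro S R hSR h0 n
    induction n with
    | zero => simpa using (coeff_zero_eq_eval_zero S).symm.trans h0
    | succ n ih =>
      have := congrArg (fun p : ℚ[X] => p.eval (n : ℚ)) hSR
      simp only [eval_sub, eval_comp, eval_add, eval_X, eval_one] at this
      rw [Finset.sum_range_succ, ← ih, ← this]
      push_cast
      ring
  obtain ⟨d, hd⟩ : ∃ d, R.natDegree = d := ⟨_, rfl⟩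
  obtain ⟨c, hc⟩ : ∃ c, R.leadingCoeff = c := ⟨_, rfl⟩
  have hc0 : c ≠ 0 := hc ▸ leadingCoeff_ne_zero.mpr hR
  have hcoefftop : R.coeff d = c := by rw [← hd, ← hc]; rfl
  rcases Nat.eq_zero_or_eq_succ_pred d with h0 | hpos
  · -- d = 0
    subst h0
    have hRC : R = C c := by rw [← hcoefftop]; exact eq_C_of_natDegree_eq_zero hd
    refine ⟨C c * X, ?_, ?_, ?_⟩
    · intro n
      rw [hRC]
      simp [Finset.sum_const, nsmul_eq_mul]
      ring
    · rw [hd, natDegree_C_mul_X _ hc0]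
    · rw [hd, hc, leadingCoeff, natDegree_C_mul_X _ hc0, coeff_C_mul, coeff_X_one]
      norm_num
  · -- d = e + 1
    obtain ⟨e, he⟩ : ∃ e, d = e + 1 := ⟨d.pred, hpos⟩
    set T : ℚ[X] := C (c / (d+1)) * X ^ (d+1) with hT
    have hcd : (c / (d+1) : ℚ) ≠ 0 := by
      apply div_ne_zero hc0; positivity
    have hDT : T.comp (X+1) - T = C (c / (d+1)) * ((X + 1) ^ (d+1) - X ^ (d+1)) := by
      rw [hT, mul_comp, C_comp, pow_comp, X_comp]; ring
    set R' : ℚ[X] := R - (T.comp (X+1) - T) with hR'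
    have hdx : ((X + 1 : ℚ[X]) ^ (d+1) - X ^ (d+1)).natDegree ≤ d := by
      have := DX_natDegree_le (e+1); rwa [← he] at this
    have hdxc : ((X + 1 : ℚ[X]) ^ (d+1) - X ^ (d+1)).coeff d = ((d : ℚ)+1) := by
      have := DX_coeff_top (e+1); rw [← he] at this; rw [this]
    have hdeg' : R'.natDegree ≤ e := by
      rw [natDegree_le_iff_coeff_eq_zero]
      intro j hj
      rw [hR', coeff_sub, hDT, coeff_C_mul]
      rcases Nat.lt_or_ge d j with h | h
      · have h1 : R.coeff j = 0 := coeff_eq_zero_of_natDegree_lt (by rw [hd]; exact h)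
        have h2 : ((X + 1 : ℚ[X]) ^ (d+1) - X ^ (d+1)).coeff j = 0 :=
          coeff_eq_zero_of_natDegree_lt (lt_of_le_of_lt hdx h)
        rw [h1, h2, mul_zero, sub_zero]
      · have hj1 : j = d := by omega
        subst hj1
        rw [hdxc, hcoefftop]
        field_simp
        ring
    obtain ⟨S', hS1, hS2, hS3⟩ := antideriv_aux e R' hdeg'
    have hTdeg : T.natDegree = d + 1 := natDegree_C_mul_X_pow _ _ hcd
    have hS'lt : S'.natDegree < T.natDegree := by omega
    refine ⟨T + S', ?_, ?_, ?_⟩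
    · apply key
      · rw [add_comp]
        rw [hR'] at hS1
        linear_combination hS1
      · rw [coeff_add, hS2, hT, coeff_C_mul, coeff_X_pow, if_neg (by omega), mul_zero, add_zero]
    · rw [natDegree_add_eq_left_of_natDegree_lt hS'lt, hTdeg, hd]
    · rw [hc, hd, leadingCoeff, natDegree_add_eq_left_of_natDegree_lt hS'lt, hTdeg, coeff_add,
        coeff_C_mul, coeff_X_pow, if_pos rfl, coeff_eq_zero_of_natDegree_lt (by omega)]
      simp

lemma comp_linear_deg (p : ℚ[X]) (a b : ℚ) (hb : b ≠ 0) :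
    (p.comp (C b * X + C a)).natDegree = p.natDegree ∧
    (p.comp (C b * X + C a)).leadingCoeff = p.leadingCoeff * b ^ p.natDegree := by
  have h1 : (C b * X + C a).natDegree = 1 := natDegree_linear hb
  constructor
  · rw [natDegree_comp, h1, mul_one]
  · rw [leadingCoeff_comp (by rw [h1]; norm_num), leadingCoeff_linear hb]

lemma sum_same_deg {ι : Type*} (s : Finset ι) (hs : s.Nonempty) (f : ι → ℚ[X]) (d : ℕ)
    (hdeg : ∀ i ∈ s, (f i).natDegree = d) (hpos : ∀ i ∈ s, 0 < (f i).leadingCoeff) :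
    (∑ i ∈ s, f i).natDegree = d ∧ 0 < (∑ i ∈ s, f i).leadingCoeff := by
  have hcoeff : (∑ i ∈ s, f i).coeff d = ∑ i ∈ s, (f i).leadingCoeff := by
    rw [finset_sum_coeff]
    exact Finset.sum_congr rfl fun i hi => by rw [← hdeg i hi]; rfl
  have hcpos : 0 < (∑ i ∈ s, f i).coeff d := by
    rw [hcoeff]; exact Finset.sum_pos hpos hs
  have hle : (∑ i ∈ s, f i).natDegree ≤ d :=
    natDegree_sum_le_of_forall_le s f fun i hi => (hdeg i hi).le
  have hge : d ≤ (∑ i ∈ s, f i).natDegree := le_natDegree_of_ne_zero (by positivity)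
  have hdd : (∑ i ∈ s, f i).natDegree = d := le_antisymm hle hge
  exact ⟨hdd, by rw [leadingCoeff, hdd]; exact hcpos⟩


/-- The set of partitions of `k` into at most `m` parts. -/
def PartSet (m k : ℕ) : Set (Fin m → ℤ) :=
  {x | (∀ i j : Fin m, i ≤ j → x j ≤ x i) ∧ (∀ i, 0 ≤ x i) ∧ ∑ i, x i = (k : ℤ)}

lemma PartSet_finite (m k : ℕ) : (PartSet m k).Finite := by
  apply Set.Finite.subset (Set.Finite.pi (fun i : Fin m => Set.finite_Icc (0:ℤ) k))
  intro x ⟨hmono, hnn, hsum⟩ i _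
  refine ⟨hnn i, ?_⟩
  calc x i ≤ ∑ j, x j := Finset.single_le_sum (fun j _ => hnn j) (Finset.mem_univ i)
  _ = (k : ℤ) := hsum

/-- The restricted partition function. -/
noncomputable def partCount (m k : ℕ) : ℕ := (PartSet m k).ncard

lemma partCount_one (k : ℕ) : partCount 1 k = 1 := by
  have : PartSet 1 k = {fun _ => (k : ℤ)} := by
    ext x
    constructor
    · rintro ⟨hmono, hnn, hsum⟩
      funext i
      have : i = 0 := Subsingleton.elim i 0
      subst this
      simpa [Fin.sum_univ_one] using hsum
    · rintro rfl
      exact ⟨fun i j _ => le_refl _, fun i => Int.natCast_nonneg k, by simp [Fin.sum_univ_one]⟩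
  rw [partCount, this, Set.ncard_singleton]

lemma partCount_rec (m k : ℕ) (hk : m + 1 ≤ k) :
    partCount (m+1) k = partCount m k + partCount (m+1) (k - (m+1)) := by
  classical
  set A : Set (Fin (m+1) → ℤ) := {x ∈ PartSet (m+1) k | x (Fin.last m) = 0} with hA
  set B : Set (Fin (m+1) → ℤ) := {x ∈ PartSet (m+1) k | x (Fin.last m) ≠ 0} with hB
  have hunion : PartSet (m+1) k = A ∪ B := by
    ext x; by_cases h : x (Fin.last m) = 0 <;> simp [hA, hB, h]
  have hdisj : Disjoint A B := by
    rw [Set.disjoint_iff_inter_eq_empty]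
    ext x; simp only [Set.mem_inter_iff, Set.mem_setOf_eq, Set.mem_empty_iff_false, hA, hB]
    tauto
  have hAfin : A.Finite := (PartSet_finite (m+1) k).subset (fun x hx => hx.1)
  have hBfin : B.Finite := (PartSet_finite (m+1) k).subset (fun x hx => hx.1)
  have hAcard : A.ncard = partCount m k := by
    have himg : A = (fun x : Fin m → ℤ => Fin.snoc x 0) '' PartSet m k := by
      ext x
      constructor
      · rintro ⟨⟨hmono, hnn, hsum⟩, hlast⟩
        refine ⟨fun i => x i.castSucc, ⟨?_, fun i => hnn _, ?_⟩, ?_⟩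
        · intro i j hij
          exact hmono _ _ (by simpa [Fin.castSucc_le_castSucc_iff] using hij)
        · have := Fin.sum_univ_castSucc (f := x)
          rw [hlast, add_zero] at this
          rw [← this, hsum]
        · funext i
          rcases Fin.eq_castSucc_or_eq_last i with ⟨j, rfl⟩ | rfl
          · simp [Fin.snoc_castSucc]
          · simp [Fin.snoc_last, hlast]
      · rintro ⟨y, ⟨hmono, hnn, hsum⟩, rfl⟩
        refine ⟨⟨?_, ?_, ?_⟩, by simp [Fin.snoc_last]⟩
        · intro i j hij
          rcases Fin.eq_castSucc_or_eq_last j with ⟨j', rfl⟩ | rfl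
          · rcases Fin.eq_castSucc_or_eq_last i with ⟨i', rfl⟩ | rfl
            · simp only [Fin.snoc_castSucc]
              exact hmono _ _ (by simpa [Fin.castSucc_le_castSucc_iff] using hij)
            · have : Fin.castSucc j' = Fin.last m :=
                le_antisymm (Fin.le_last _) (by exact hij)
              exact le_of_eq (by rw [this])
          · simp only [Fin.snoc_last]
            rcases Fin.eq_castSucc_or_eq_last i with ⟨i', rfl⟩ | rfl
            · simp [Fin.snoc_castSucc]; exact hnn i'
            · simp
        · intro i
          rcases Fin.eq_castSucc_or_eq_last i with ⟨i', rfl⟩ | rfl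
          · simp [Fin.snoc_castSucc]; exact hnn i'
          · simp
        · rw [Fin.sum_univ_castSucc]
          simp only [Fin.snoc_castSucc, Fin.snoc_last, add_zero]
          exact hsum
    rw [himg, Set.ncard_image_of_injective _ ?_]
    · rfl
    · intro a b hab
      funext i
      have := congrFun hab i.castSucc
      simpa [Fin.snoc_castSucc] using this
  have hBcard : B.ncard = partCount (m+1) (k - (m+1)) := by
    have himg : B = (fun x : Fin (m+1) → ℤ => fun i => x i + 1) '' PartSet (m+1) (k - (m+1)) := by
      ext x
      constructor
      · rintro ⟨⟨hmono, hnn, hsum⟩, hlast⟩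
        have hlast1 : 1 ≤ x (Fin.last m) := by
          have := hnn (Fin.last m); omega
        refine ⟨fun i => x i - 1, ⟨?_, ?_, ?_⟩, ?_⟩
        · intro i j hij; dsimp only; have := hmono i j hij; omega
        · intro i
          dsimp only
          have h1 : x (Fin.last m) ≤ x i := hmono i (Fin.last m) (Fin.le_last i)
          omega
        · dsimp only
          rw [Finset.sum_sub_distrib]
          rw [hsum]
          simp only [Finset.sum_const, Finset.card_univ, Fintype.card_fin, nsmul_eq_mul, mul_one]
          push_cast [Nat.cast_sub hk]
          ring
        · funext i; ring
      · rintro ⟨y, ⟨hmono, hnn, hsum⟩, rfl⟩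
        refine ⟨⟨?_, ?_, ?_⟩, ?_⟩
        · intro i j hij; dsimp only; have := hmono i j hij; omega
        · intro i; dsimp only; have := hnn i; omega
        · dsimp only
          rw [Finset.sum_add_distrib, hsum]
          simp only [Finset.sum_const, Finset.card_univ, Fintype.card_fin, nsmul_eq_mul, mul_one]
          push_cast [Nat.cast_sub hk]
          ring
        · dsimp only; have := hnn (Fin.last m); omega
    rw [himg, Set.ncard_image_of_injective _ ?_]
    · rfl
    · intro a b hab
      funext i
      have := congrFun hab i
      simpa using this
  rw [partCount, hunion, Set.ncard_union_eq hdisj hAfin hBfin, hAcard, hBcard]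


lemma C_add_deg (a : ℚ) (p : ℚ[X]) (hp : 0 < p.natDegree) :
    (C a + p).natDegree = p.natDegree ∧ (C a + p).leadingCoeff = p.leadingCoeff := by
  have hdlt : (C a).degree < p.degree := lt_of_le_of_lt degree_C_le (natDegree_pos_iff_degree_pos.mp hp)
  exact ⟨natDegree_add_eq_right_of_natDegree_lt (by simpa using hp),
    leadingCoeff_add_of_degree_lt hdlt⟩

lemma lcm_Icc_ne_zero (m : ℕ) : ((Finset.Icc 1 m).lcm id) ≠ 0 := by
  simp only [Ne, Finset.lcm_eq_zero_iff]
  intro h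
  simp only [Set.mem_image, Finset.mem_coe, Finset.mem_Icc, id_eq] at h
  obtain ⟨x, hx, h0⟩ := h
  omega

theorem QP : ∀ m : ℕ, 1 ≤ m → ∃ P : ℕ → Polynomial ℚ,
    (∀ r : ℕ, (P r).natDegree = m - 1 ∧ 0 < (P r).leadingCoeff) ∧
    (∀ k : ℕ, (P (k % ((Finset.Icc 1 m).lcm id))).eval (k : ℚ) = (partCount m k : ℚ)) := by
  intro m hm
  induction m, hm using Nat.le_induction with
  | base =>
    refine ⟨fun _ => C 1, fun r => ⟨natDegree_C 1, by simp⟩, fun k => ?_⟩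
    simp [partCount_one]
  | succ m hm ih =>
    obtain ⟨P, hPdeg, hPval⟩ := ih
    set L : ℕ := (Finset.Icc 1 m).lcm id with hLdef
    set L2 : ℕ := (Finset.Icc 1 (m+1)).lcm id with hL2def
    have hL0 : L ≠ 0 := lcm_Icc_ne_zero m
    have hL20 : L2 ≠ 0 := lcm_Icc_ne_zero (m+1)
    have hL2eq : L2 = Nat.lcm (m+1) L := by
      rw [hL2def, ← Finset.insert_Icc_right_eq_Icc_add_one (by omega), Finset.lcm_insert]
      rfl
    have hsL2 : (m+1) ∣ L2 := by rw [hL2eq]; exact Nat.dvd_lcm_left _ _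
    have hLL2 : L ∣ L2 := by rw [hL2eq]; exact Nat.dvd_lcm_right _ _
    set t : ℕ := L2 / (m+1) with htdef
    have ht : t * (m+1) = L2 := Nat.div_mul_cancel hsL2
    have ht0 : 0 < t := by
      rcases Nat.eq_zero_or_pos t with h | h
      · exfalso; apply hL20; rw [← ht, h, zero_mul]
      · exact h
    -- iterated recurrence, chunk of n steps of size (m+1)
    have chunk : ∀ n k : ℕ, n * (m+1) ≤ k →
        partCount (m+1) k = partCount (m+1) (k - n*(m+1)) +
          ∑ j ∈ Finset.range n, partCount m (k - j*(m+1)) := by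
      intro n
      induction n with
      | zero => intro k _; simp
      | succ n ihn =>
        intro k hk
        have h1 : m + 1 ≤ k := le_trans (by nlinarith) hk
        have h2 : n * (m+1) ≤ k - (m+1) := by
          have : (n+1)*(m+1) = n*(m+1) + (m+1) := by ring
          omega
        rw [partCount_rec m k h1, ihn (k - (m+1)) h2]
        have hsub : ∀ j : ℕ, k - (m+1) - j*(m+1) = k - (j+1)*(m+1) := by
          intro j
          rw [Nat.sub_sub]
          congr 1
          ring
        have hreidx : ∑ j ∈ Finset.range (n+1), partCount m (k - j*(m+1)) =
            (∑ j ∈ Finset.range n, partCount m (k - (j+1)*(m+1))) + partCount m (k - 0*(m+1)) :=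
          Finset.sum_range_succ' _ _
        simp only [zero_mul, Nat.sub_zero] at hreidx
        rw [hreidx]
        simp only [hsub]
        omega
    -- iterate chunks of size L2
    have iterate : ∀ n r : ℕ,
        partCount (m+1) (r + n * L2) = partCount (m+1) r +
          ∑ i ∈ Finset.range n, ∑ j ∈ Finset.range t,
            partCount m (r + (i+1) * L2 - j*(m+1)) := by
      intro n r
      induction n with
      | zero => simp
      | succ n ihn =>
        have hstep := chunk t (r + (n+1) * L2) (by
          rw [ht]; nlinarith)
        rw [ht] at hstep
        have harg : r + (n+1) * L2 - L2 = r + n * L2 := by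
          have : (n+1) * L2 = n * L2 + L2 := by ring
          omega
        rw [harg] at hstep
        rw [hstep, ihn, Finset.sum_range_succ]
        ring
    -- the per-residue polynomial
    have main : ∀ r : ℕ, ∃ Q : ℚ[X], Q.natDegree = m ∧ 0 < Q.leadingCoeff ∧
        ∀ n : ℕ, Q.eval ((r + n * L2 : ℕ) : ℚ) = (partCount (m+1) (r + n * L2) : ℚ) := by
      intro r
      set R : ℚ[X] := ∑ j ∈ Finset.range t,
        (P ((r + (L2 - j*(m+1))) % L)).comp
          (C (L2 : ℚ) * X + C (((r + (L2 - j*(m+1)) : ℕ)) : ℚ)) with hRdef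
      have hRprops : R.natDegree = m - 1 ∧ 0 < R.leadingCoeff := by
        apply sum_same_deg _ ⟨0, Finset.mem_range.mpr ht0⟩
        · intro j _
          rw [(comp_linear_deg _ _ _ (by exact_mod_cast hL20)).1]
          exact (hPdeg _).1
        · intro j _
          rw [(comp_linear_deg _ _ _ (by exact_mod_cast hL20)).2]
          apply mul_pos (hPdeg _).2
          apply pow_pos
          have : (0:ℚ) < L2 := by exact_mod_cast Nat.pos_of_ne_zero hL20
          exact this
      have hR0 : R ≠ 0 := fun h => by simp [h] at hRprops
      obtain ⟨S, hSval, hSdeg, hSlead⟩ := antideriv R hR0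
      have hSdeg' : S.natDegree = m := by rw [hSdeg, hRprops.1]; omega
      have hSlead' : 0 < S.leadingCoeff := by
        rw [hSlead]; apply div_pos hRprops.2; positivity
      -- inner sum equals R.eval i
      have hinner : ∀ i : ℕ, ((∑ j ∈ Finset.range t,
          partCount m (r + (i+1) * L2 - j*(m+1)) : ℕ) : ℚ) = R.eval (i : ℚ) := by
        intro i
        rw [hRdef, eval_finset_sum]
        push_cast
        apply Finset.sum_congr rfl
        intro j hj
        have hjt : j < t := Finset.mem_range.mp hj
        have hjle : j*(m+1) ≤ L2 := by
          rw [← ht]; exact Nat.mul_le_mul_right _ (le_of_lt hjt)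
        have hargeq : r + (i+1) * L2 - j*(m+1) = (r + (L2 - j*(m+1))) + i * L2 := by
          have h1 : (i+1) * L2 = i * L2 + L2 := by ring
          omega
        have hmod : ((r + (L2 - j*(m+1))) + i * L2) % L = (r + (L2 - j*(m+1))) % L := by
          obtain ⟨c, hc⟩ := hLL2
          rw [hc]
          have : i * (L * c) = L * (i * c) := by ring
          rw [this, Nat.add_mul_mod_self_left]
        have := hPval ((r + (L2 - j*(m+1))) + i * L2)
        rw [hmod] at this
        rw [hargeq, ← this, eval_comp]
        congr 1
        simp only [eval_add, eval_mul, eval_C, eval_X]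
        push_cast
        ring
      -- the final polynomial
      refine ⟨C ((partCount (m+1) r : ℚ)) + S.comp (C (1/(L2:ℚ)) * X + C (-(r:ℚ)/L2)), ?_, ?_, ?_⟩
      · rw [(C_add_deg _ _ ?_).1]
        · rw [(comp_linear_deg _ _ _ (by positivity)).1, hSdeg']
        · rw [(comp_linear_deg _ _ _ ?_).1, hSdeg']
          · omega
          · have : (0:ℚ) < L2 := by exact_mod_cast Nat.pos_of_ne_zero hL20
            positivity
      · rw [(C_add_deg _ _ ?_).2]
        · rw [(comp_linear_deg _ _ _ ?_).2]
          · apply mul_pos hSlead'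
            apply pow_pos
            have : (0:ℚ) < L2 := by exact_mod_cast Nat.pos_of_ne_zero hL20
            positivity
          · have : (0:ℚ) < L2 := by exact_mod_cast Nat.pos_of_ne_zero hL20
            positivity
        · rw [(comp_linear_deg _ _ _ ?_).1, hSdeg']
          · omega
          · have : (0:ℚ) < L2 := by exact_mod_cast Nat.pos_of_ne_zero hL20
            positivity
      · intro n
        have hL2Q : (0:ℚ) < L2 := by exact_mod_cast Nat.pos_of_ne_zero hL20
        rw [eval_add, eval_C, eval_comp]
        have hx : Polynomial.eval ((r + n * L2 : ℕ) : ℚ) (C (1/(L2:ℚ)) * X + C (-(r:ℚ)/L2)) = (n : ℚ) := by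
          simp only [eval_add, eval_mul, eval_C, eval_X]
          push_cast
          field_simp
          ring
        rw [hx, hSval n, iterate n r, Nat.cast_add]
        congr 1
        rw [Nat.cast_sum]
        exact Finset.sum_congr rfl fun i _ => (hinner i).symm
    choose Q hQdeg hQpos hQval using main
    refine ⟨fun r => Q r, fun r => ⟨by rw [hQdeg]; omega, hQpos r⟩, fun k => ?_⟩
    have hk : k % L2 + (k / L2) * L2 = k := by
      rw [Nat.mul_comm]; exact Nat.mod_add_div k L2
    have := hQval (k % L2) (k / L2)
    rw [hk] at this
    exact this

/-- The restricted partition function `p(k, m)`, counting partitions of `k` into at most `m`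
parts, is a quasipolynomial of degree `m - 1` with period `L = lcm(1, 2, …, m)`. -/
theorem restricted_partition_function_quasipolynomial
    (m : ℕ) (hm : 0 < m) (L : ℕ) (hL : L = (Finset.Icc 1 m).lcm id) :
    ∃ p : ℕ → Polynomial ℚ,
      (∀ r : ℕ, r < L → (p r).natDegree = m - 1) ∧
      ∀ k : ℕ, 0 < k →
        (p (k % L)).eval (k : ℚ) =
          (Set.ncard {x : Fin m → ℤ |
            (∀ i j : Fin m, i ≤ j → x j ≤ x i) ∧ (∀ i, 0 ≤ x i) ∧ ∑ i, x i = (k : ℤ)} : ℚ) := by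
  subst hL
  obtain ⟨P, hdeg, hval⟩ := QP m hm
  exact ⟨P, fun r _ => (hdeg r).1, fun k _ => hval k⟩
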